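/- Let Γ ⊆ Sym({1,…,n}) be a permutation group, let d be even, and let v, v̄ ∈ S_d(Γ) be irreducible. Then v and v̄ are deformation equivalent if and only if their representations are positively isomorphic. -/

import Mathlib

open Matrix

/-- The matrix of an arrangement of `n` points in `ℝ^d`: the `i`-th row is the point `v i`. -/
def arrMat {n d : ℕ} (v : Fin n → Fin d → ℝ) : Matrix (Fin n) (Fin d) ℝ := Matrix.of v

/-- An arrangement is normalized if `MᵀM` is the identity matrix. -/
def IsNormalized {n d : ℕ} (v : Fin n → Fin d → ℝ) : Prop :=
  (arrMat v)ᵀ * arrMat v = 1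

/-- The arrangement space of `v`: the column span of its matrix, a subspace of `ℝ^n`. -/
def arrSpace {n d : ℕ} (v : Fin n → Fin d → ℝ) : Submodule ℝ (Fin n → ℝ) :=
  Submodule.span ℝ (Set.range (arrMat v)ᵀ)

/-- `detPair v w = det (M_wᵀ * M_v)`, i.e. `det(v, w̄) = det(M̄ᵀ M)` with `w` playing `v̄`. -/
noncomputable def detPair {n d : ℕ} (v w : Fin n → Fin d → ℝ) : ℝ :=
  ((arrMat w)ᵀ * arrMat v).det

/-- Two subspaces `U, W ⊆ ℝ^n` are orthogonal if `⟨u, w⟩ = 0` for all `u ∈ U`, `w ∈ W`. -/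
def OrthSpaces {n : ℕ} (U W : Submodule ℝ (Fin n → ℝ)) : Prop :=
  ∀ u ∈ U, ∀ w ∈ W, u ⬝ᵥ w = 0

/-- Arrangements are equivalent if related by an invertible linear map `X`. -/
def AreEquivalent {n d : ℕ} (v w : Fin n → Fin d → ℝ) : Prop :=
  ∃ X : Matrix (Fin d) (Fin d) ℝ, X.det ≠ 0 ∧ ∀ i, X.mulVec (v i) = w i

/-- Arrangements are positively equivalent if related by a linear map of positive determinant. -/
def PosEquivalent {n d : ℕ} (v w : Fin n → Fin d → ℝ) : Prop :=
  ∃ X : Matrix (Fin d) (Fin d) ℝ, 0 < X.det ∧ ∀ i, X.mulVec (v i) = w i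

/-- `T : Γ → O(ℝ^d)` is a representation: orthogonal values and multiplicative. -/
def IsRep {n d : ℕ} (Γ : Subgroup (Equiv.Perm (Fin n)))
    (T : Γ → Matrix (Fin d) (Fin d) ℝ) : Prop :=
  (∀ φ, (T φ)ᵀ * T φ = 1) ∧ (∀ φ ψ, T (φ * ψ) = T φ * T ψ)

/-- `T` is a representation of the arrangement `v`: `T_φ v_i = v_{φ(i)}`. -/
def IsRepOf {n d : ℕ} (Γ : Subgroup (Equiv.Perm (Fin n)))
    (T : Γ → Matrix (Fin d) (Fin d) ℝ) (v : Fin n → Fin d → ℝ) : Prop :=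
  IsRep Γ T ∧ ∀ (φ : Γ) (i : Fin n), (T φ).mulVec (v i) = v (φ.val i)

/-- `v` is a `Γ`-arrangement if it has a representation. -/
def IsGammaArr {n d : ℕ} (Γ : Subgroup (Equiv.Perm (Fin n)))
    (v : Fin n → Fin d → ℝ) : Prop :=
  ∃ T : Γ → Matrix (Fin d) (Fin d) ℝ, IsRepOf Γ T v

/-- A representation is irreducible if the only invariant subspaces of `ℝ^d` are `⊥` and `⊤`. -/
def IrredRep {n d : ℕ} (Γ : Subgroup (Equiv.Perm (Fin n)))
    (T : Γ → Matrix (Fin d) (Fin d) ℝ) : Prop :=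
  ∀ W : Submodule ℝ (Fin d → ℝ), (∀ (φ : Γ), ∀ x ∈ W, (T φ).mulVec x ∈ W) → W = ⊥ ∨ W = ⊤

/-- Representations are isomorphic: an invertible equivariant map exists. -/
def IsoReps {n d : ℕ} (Γ : Subgroup (Equiv.Perm (Fin n)))
    (T T' : Γ → Matrix (Fin d) (Fin d) ℝ) : Prop :=
  ∃ R : Matrix (Fin d) (Fin d) ℝ, R.det ≠ 0 ∧ ∀ φ, R * T φ = T' φ * R

/-- Representations are positively isomorphic: an equivariant map with positive determinant. -/
def PosIsoReps {n d : ℕ} (Γ : Subgroup (Equiv.Perm (Fin n)))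
    (T T' : Γ → Matrix (Fin d) (Fin d) ℝ) : Prop :=
  ∃ R : Matrix (Fin d) (Fin d) ℝ, 0 < R.det ∧ ∀ φ, R * T φ = T' φ * R

/-- `S_d(Γ)`: the set of normalized `Γ`-arrangements of `n` points in `ℝ^d`. -/
def SdSet (n d : ℕ) (Γ : Subgroup (Equiv.Perm (Fin n))) : Set (Fin n → Fin d → ℝ) :=
  {v | IsNormalized v ∧ IsGammaArr Γ v}

/-- Deformation equivalence: a continuous path in `S_d(Γ)` from `v` to `w`. -/
def DeformEquiv {n d : ℕ} (Γ : Subgroup (Equiv.Perm (Fin n)))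
    (v w : Fin n → Fin d → ℝ) : Prop :=
  ∃ c : ℝ → (Fin n → Fin d → ℝ), ContinuousOn c (Set.Icc 0 1) ∧
    (∀ t ∈ Set.Icc (0:ℝ) 1, c t ∈ SdSet n d Γ) ∧ c 0 = v ∧ c 1 = w

/-- `v` is flexible if it can be deformed into some non-equivalent arrangement. -/
def Flexible {n d : ℕ} (Γ : Subgroup (Equiv.Perm (Fin n))) (v : Fin n → Fin d → ℝ) : Prop :=
  ∃ w : Fin n → Fin d → ℝ, DeformEquiv Γ v w ∧ ¬ AreEquivalent v w

/-- A subspace `W ⊆ ℝ^n` is `Γ`-invariant (under the permutation action). -/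
def GammaInvariant {n : ℕ} (Γ : Subgroup (Equiv.Perm (Fin n)))
    (W : Submodule ℝ (Fin n → ℝ)) : Prop :=
  ∀ (φ : Γ), ∀ x ∈ W, (fun i => x (φ.val⁻¹ i)) ∈ W


noncomputable section AuxAll

variable {n d : ℕ} {Γ : Subgroup (Equiv.Perm (Fin n))}

lemma repOrth' {T : Γ → Matrix (Fin d) (Fin d) ℝ} (h : IsRep Γ T) (φ : Γ) :
    T φ * (T φ)ᵀ = 1 := mul_eq_one_comm.mp (h.1 φ)

lemma repOne {T : Γ → Matrix (Fin d) (Fin d) ℝ} (h : IsRep Γ T) : T 1 = 1 := by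
  have h1 : T 1 = T 1 * T 1 := by simpa using h.2 1 1
  have h2 : T 1 * (T 1)ᵀ = 1 := repOrth' h 1
  calc T 1 = T 1 * (T 1 * (T 1)ᵀ) := by rw [h2, mul_one]
    _ = (T 1 * T 1) * (T 1)ᵀ := by rw [mul_assoc]
    _ = T 1 * (T 1)ᵀ := by rw [← h1]
    _ = 1 := h2

lemma repInv {T : Γ → Matrix (Fin d) (Fin d) ℝ} (h : IsRep Γ T) (φ : Γ) :
    (T φ)ᵀ = T φ⁻¹ := by
  have h1 : T φ⁻¹ * T φ = 1 := by rw [← h.2, inv_mul_cancel, repOne h]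
  have h2 : T φ * (T φ)ᵀ = 1 := repOrth' h φ
  calc (T φ)ᵀ = (T φ⁻¹ * T φ) * (T φ)ᵀ := by rw [h1, one_mul]
    _ = T φ⁻¹ * (T φ * (T φ)ᵀ) := by rw [mul_assoc]
    _ = T φ⁻¹ := by rw [h2, mul_one]

lemma actionInv {T : Γ → Matrix (Fin d) (Fin d) ℝ} {u : Fin n → Fin d → ℝ}
    (h : IsRep Γ T) (hu : ∀ (φ : Γ) (i : Fin n), (T φ).mulVec (u i) = u (φ.val i)) (φ : Γ)
    (i : Fin n) : (T φ)ᵀ.mulVec (u i) = u ((φ.val)⁻¹ i) := by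
  rw [repInv h, hu φ⁻¹ i]
  norm_cast

/-- Key intertwining property of mixed Gram matrices. -/
lemma gram_intertwine {S S' : Γ → Matrix (Fin d) (Fin d) ℝ} {u u' : Fin n → Fin d → ℝ}
    (hS : IsRep Γ S)
    (hu : ∀ (φ : Γ) (i : Fin n), (S φ).mulVec (u i) = u (φ.val i))
    (hu' : ∀ (φ : Γ) (i : Fin n), (S' φ).mulVec (u' i) = u' (φ.val i)) (φ : Γ) :
    ((arrMat u')ᵀ * arrMat u) * S φ = S' φ * ((arrMat u')ᵀ * arrMat u) := by
  ext a b
  have lhs : (((arrMat u')ᵀ * arrMat u) * S φ) a b = ∑ i, u' i a * ((S φ)ᵀ.mulVec (u i)) b := by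
    simp only [Matrix.mul_apply, arrMat, Matrix.transpose_apply, Matrix.of_apply,
      Matrix.mulVec, dotProduct, Finset.sum_mul, Finset.mul_sum]
    rw [Finset.sum_comm]
    exact Finset.sum_congr rfl fun i _ => Finset.sum_congr rfl fun k _ => by ring
  have rhs : (S' φ * ((arrMat u')ᵀ * arrMat u)) a b
      = ∑ i, ((S' φ).mulVec (u' i)) a * u i b := by
    simp only [Matrix.mul_apply, arrMat, Matrix.transpose_apply, Matrix.of_apply,
      Matrix.mulVec, dotProduct, Finset.sum_mul, Finset.mul_sum]
    rw [Finset.sum_comm]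
    exact Finset.sum_congr rfl fun i _ => Finset.sum_congr rfl fun k _ => by ring
  rw [lhs, rhs]
  have : ∀ i, u' i a * ((S φ)ᵀ.mulVec (u i)) b = u' i a * u ((φ.val)⁻¹ i) b := by
    intro i; rw [actionInv hS hu]
  rw [Finset.sum_congr rfl fun i _ => this i]
  have : ∀ i, ((S' φ).mulVec (u' i)) a * u i b = u' (φ.val i) a * u i b := by
    intro i; rw [hu']
  rw [Finset.sum_congr rfl fun i _ => this i]
  rw [← Equiv.sum_comp φ.val (fun i => u' i a * u ((φ.val)⁻¹ i) b)]
  simp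

lemma rep_unique {u : Fin n → Fin d → ℝ} (hn : IsNormalized u)
    {A B : Matrix (Fin d) (Fin d) ℝ} (h : ∀ i, A.mulVec (u i) = B.mulVec (u i)) : A = B := by
  have h1 : A * (arrMat u)ᵀ = B * (arrMat u)ᵀ := by
    ext a i
    have := congrFun (h i) a
    simpa [Matrix.mul_apply, Matrix.mulVec, dotProduct, arrMat] using this
  calc A = A * ((arrMat u)ᵀ * arrMat u) := by rw [hn, mul_one]
    _ = (A * (arrMat u)ᵀ) * arrMat u := by rw [Matrix.mul_assoc]
    _ = (B * (arrMat u)ᵀ) * arrMat u := by rw [h1]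
    _ = B * ((arrMat u)ᵀ * arrMat u) := by rw [Matrix.mul_assoc]
    _ = B := by rw [hn, mul_one]

lemma matrix_eq_of_mulVec_eq {A B : Matrix (Fin d) (Fin d) ℝ}
    (h : ∀ x : Fin d → ℝ, A.mulVec x = B.mulVec x) : A = B := by
  ext a b
  have := congrFun (h (Pi.single b 1)) a
  simpa [Matrix.mulVec_single] using this


/-- A symmetric matrix commuting with an irreducible representation is scalar. -/
lemma sym_schur (hd : 0 < d) {T : Γ → Matrix (Fin d) (Fin d) ℝ} (hirr : IrredRep Γ T)
    {S : Matrix (Fin d) (Fin d) ℝ} (hsym : Sᵀ = S)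
    (hcomm : ∀ φ, S * T φ = T φ * S) : ∃ c : ℝ, S = c • (1 : Matrix (Fin d) (Fin d) ℝ) := by
  have hherm : S.IsHermitian := by
    rw [Matrix.IsHermitian, Matrix.conjTranspose_eq_transpose_of_trivial, hsym]
  set j : Fin d := ⟨0, hd⟩
  set c : ℝ := hherm.eigenvalues j with hc
  set x : Fin d → ℝ := ⇑(hherm.eigenvectorBasis j) with hx
  have hxe : S.mulVec x = c • x := hherm.mulVec_eigenvectorBasis j
  have hxne : x ≠ 0 := by
    have := hherm.eigenvectorBasis.orthonormal.ne_zero j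
    intro hcon
    apply this
    ext i
    exact congrFun hcon i
  refine ⟨c, ?_⟩
  set W : Submodule ℝ (Fin d → ℝ) := LinearMap.ker ((S - c • (1 : Matrix (Fin d) (Fin d) ℝ)).mulVecLin) with hW
  have hmem : ∀ z, z ∈ W ↔ S.mulVec z = c • z := by
    intro z
    simp only [hW, LinearMap.mem_ker, Matrix.mulVecLin_apply, Matrix.sub_mulVec,
      Matrix.smul_mulVec, Matrix.one_mulVec, sub_eq_zero]
  have hinv : ∀ (φ : Γ), ∀ z ∈ W, (T φ).mulVec z ∈ W := by
    intro φ z hz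
    rw [hmem] at hz ⊢
    rw [Matrix.mulVec_mulVec, hcomm, ← Matrix.mulVec_mulVec, hz, Matrix.mulVec_smul]
  rcases hirr W hinv with hbot | htop
  · exfalso
    apply hxne
    have : x ∈ W := (hmem x).mpr hxe
    rw [hbot] at this
    simpa using this
  · apply matrix_eq_of_mulVec_eq
    intro z
    have hzW : z ∈ W := htop ▸ Submodule.mem_top
    rw [(hmem z).mp hzW, Matrix.smul_mulVec, Matrix.one_mulVec]


end AuxAll

noncomputable section OGsec


def OG (d : ℕ) : Set (Matrix (Fin d) (Fin d) ℝ) := {X | Xᵀ * X = 1}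

def Hh {d : ℕ} (u : Fin d → ℝ) : Matrix (Fin d) (Fin d) ℝ :=
  1 - (2 / (u ⬝ᵥ u)) • vecMulVec u u

variable {d : ℕ}

lemma dot_self_nonneg (u : Fin d → ℝ) : 0 ≤ u ⬝ᵥ u :=
  Finset.sum_nonneg fun i _ => mul_self_nonneg _

lemma dot_self_eq_zero_iff {u : Fin d → ℝ} : u ⬝ᵥ u = 0 ↔ u = 0 := by
  constructor
  · intro h
    funext i
    have := (Finset.sum_eq_zero_iff_of_nonneg (fun i _ => mul_self_nonneg (u i))).mp h i
      (Finset.mem_univ i)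
    exact mul_self_eq_zero.mp this
  · rintro rfl; simp [dotProduct]

lemma dot_self_pos {u : Fin d → ℝ} (hu : u ≠ 0) : 0 < u ⬝ᵥ u :=
  lt_of_le_of_ne (dot_self_nonneg u) fun h => hu (dot_self_eq_zero_iff.mp h.symm)

lemma Hh_zero : Hh (0 : Fin d → ℝ) = 1 := by
  simp [Hh, dotProduct]

lemma vecMulVec_sq (u : Fin d → ℝ) :
    vecMulVec u u * vecMulVec u u = (u ⬝ᵥ u) • vecMulVec u u := by
  ext i j
  simp only [Matrix.mul_apply, Matrix.vecMulVec_apply, Matrix.smul_apply, smul_eq_mul,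
    dotProduct, Finset.sum_mul, Finset.mul_sum]
  exact Finset.sum_congr rfl fun k _ => by ring

lemma Hh_transpose (u : Fin d → ℝ) : (Hh u)ᵀ = Hh u := by
  unfold Hh
  rw [Matrix.transpose_sub, Matrix.transpose_one, Matrix.transpose_smul]
  congr 1
  ext i j
  simp [Matrix.vecMulVec_apply, mul_comm]

lemma Hh_mul_self (u : Fin d → ℝ) : Hh u * Hh u = 1 := by
  by_cases hu : u = 0
  · rw [hu, Hh_zero, one_mul]
  · unfold Hh
    rw [Matrix.sub_mul, Matrix.mul_sub, Matrix.mul_sub, one_mul, mul_one, Matrix.smul_mul,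
      one_mul, Matrix.mul_smul, vecMulVec_sq]
    have hq : u ⬝ᵥ u ≠ 0 := ne_of_gt (dot_self_pos hu)
    have hs : (2 / (u ⬝ᵥ u)) • ((2 / (u ⬝ᵥ u)) • ((u ⬝ᵥ u) • vecMulVec u u))
        = (2 / (u ⬝ᵥ u) + 2 / (u ⬝ᵥ u)) • vecMulVec u u := by
      rw [smul_smul, smul_smul]
      congr 1
      field_simp
      ring
    rw [hs, add_smul]
    abel

lemma Hh_og (u : Fin d → ℝ) : Hh u ∈ OG d := by
  show (Hh u)ᵀ * Hh u = 1
  rw [Hh_transpose, Hh_mul_self]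

lemma og_mul {X Y : Matrix (Fin d) (Fin d) ℝ} (hX : X ∈ OG d) (hY : Y ∈ OG d) :
    X * Y ∈ OG d := by
  show (X * Y)ᵀ * (X * Y) = 1
  rw [Matrix.transpose_mul, Matrix.mul_assoc, ← Matrix.mul_assoc Xᵀ X Y, hX, one_mul, hY]

lemma og_one : (1 : Matrix (Fin d) (Fin d) ℝ) ∈ OG d := by
  show (1 : Matrix (Fin d) (Fin d) ℝ)ᵀ * 1 = 1
  rw [Matrix.transpose_one, one_mul]

lemma det_Hh {u : Fin d → ℝ} (hu : u ≠ 0) : (Hh u).det = -1 := by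
  have hq : u ⬝ᵥ u ≠ 0 := ne_of_gt (dot_self_pos hu)
  have h1 : Hh u = 1 + Matrix.replicateCol (Fin 1) ((-(2 / (u ⬝ᵥ u))) • u) * Matrix.replicateRow (Fin 1) u := by
    unfold Hh
    erw [← Matrix.vecMulVec_eq (Fin 1)]
    rw [sub_eq_add_neg]
    congr 1
    ext i j
    simp [Matrix.vecMulVec_apply]
    ring
  erw [h1, Matrix.det_one_add_replicateCol_mul_replicateRow]
  have : u ⬝ᵥ ((-(2 / (u ⬝ᵥ u))) • u) = -(2 / (u ⬝ᵥ u)) * (u ⬝ᵥ u) := dotProduct_smul _ _ _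
  rw [this]
  field_simp
  ring

lemma continuous_Hh_comp {X : Type*} [TopologicalSpace X] {f : X → Fin d → ℝ}
    (hf : Continuous f) (h0 : ∀ x, f x ≠ 0) : Continuous fun x => Hh (f x) := by
  unfold Hh
  apply Continuous.sub continuous_const
  apply Continuous.smul (f := fun x => 2 / (f x ⬝ᵥ f x)) (g := fun x => vecMulVec (f x) (f x))
  · exact Continuous.div continuous_const (hf.dotProduct hf)
      fun x => ne_of_gt (dot_self_pos (h0 x))
  · exact continuous_matrix fun i j => ((continuous_apply i).comp hf).mul
      ((continuous_apply j).comp hf)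

lemma joinedIn_og_mul {X Y : Matrix (Fin d) (Fin d) ℝ} (hX : JoinedIn (OG d) 1 X)
    (hY : JoinedIn (OG d) 1 Y) : JoinedIn (OG d) 1 (X * Y) := by
  obtain ⟨γ₁, h₁⟩ := hX
  obtain ⟨γ₂, h₂⟩ := hY
  refine ⟨⟨⟨fun t => γ₁ t * γ₂ t, (γ₁.continuous).matrix_mul γ₂.continuous⟩, ?_, ?_⟩,
    fun t => og_mul (h₁ t) (h₂ t)⟩
  · show γ₁ 0 * γ₂ 0 = 1
    rw [γ₁.source, γ₂.source, one_mul]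
  · show γ₁ 1 * γ₂ 1 = X * Y
    rw [γ₁.target, γ₂.target]

lemma joined_det_pos {X : Matrix (Fin d) (Fin d) ℝ} (h : JoinedIn (OG d) 1 X) : 0 < X.det := by
  obtain ⟨γ, hγ⟩ := h
  set f : ℝ → ℝ := fun t => (γ.extend t).det with hf
  have hcont : ContinuousOn f (Set.Icc 0 1) := (γ.continuous_extend.matrix_det).continuousOn
  have hne : ∀ t ∈ Set.Icc (0:ℝ) 1, f t ≠ 0 := by
    intro t ht
    have hmem : γ.extend t ∈ OG d := by rw [γ.extend_apply ht]; exact hγ _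
    have : (γ.extend t).det * (γ.extend t).det = 1 := by
      have := congrArg Matrix.det hmem
      rwa [Matrix.det_mul, Matrix.det_transpose, Matrix.det_one] at this
    intro h0
    rw [hf] at h0
    simp only [h0, mul_zero] at this
    exact zero_ne_one this
  have hf0 : f 0 = 1 := by rw [hf]; simp [γ.extend_zero]
  have hf1 : f 1 = X.det := by rw [hf]; simp [γ.extend_one]
  by_contra hle
  push_neg at hle
  have hlt : f 1 < 0 := lt_of_le_of_ne (hf1 ▸ hle) (hne 1 (by norm_num))
  have : (0:ℝ) ∈ Set.Icc (f 1) (f 0) := ⟨le_of_lt hlt, by rw [hf0]; norm_num⟩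
  obtain ⟨t, ht, hft⟩ := intermediate_value_Icc' zero_le_one hcont this
  exact hne t ht hft

lemma hh_joined (hrank : 1 < Module.rank ℝ (Fin d → ℝ)) {u u' : Fin d → ℝ}
    (hu : u ≠ 0) (hu' : u' ≠ 0) : JoinedIn (OG d) 1 (Hh u * Hh u') := by
  have hpc : IsPathConnected ({(0 : Fin d → ℝ)}ᶜ) :=
    isPathConnected_compl_singleton_of_one_lt_rank hrank 0
  obtain ⟨ζ, hζ⟩ := hpc.joinedIn u' (by simpa using hu') u (by simpa using hu)
  refine JoinedIn.symm ⟨⟨⟨fun t => Hh u * Hh (ζ t),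
    Continuous.matrix_mul continuous_const
      (continuous_Hh_comp ζ.continuous fun t => by simpa using hζ t)⟩, ?_, ?_⟩,
    fun t => og_mul (Hh_og u) (Hh_og (ζ t))⟩
  · show Hh u * Hh (ζ 0) = Hh u * Hh u'
    rw [ζ.source]
  · show Hh u * Hh (ζ 1) = 1
    rw [ζ.target, Hh_mul_self]


lemma euclid_inner_eq_dot (x y : EuclideanSpace ℝ (Fin d)) :
    (inner ℝ x y : ℝ) = (x : Fin d → ℝ) ⬝ᵥ y := by
  rw [PiLp.inner_apply]
  simp [dotProduct, RCLike.inner_apply, mul_comm]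

lemma hh_reflection (v x : EuclideanSpace ℝ (Fin d)) :
    (Submodule.reflection (ℝ ∙ v)ᗮ) x = (Hh v).mulVec x := by
  rw [Submodule.reflection_apply, Submodule.starProjection_orthogonal_val, Submodule.starProjection_singleton]
  have hns : (‖v‖ : ℝ) ^ 2 = (v : Fin d → ℝ) ⬝ᵥ v := by
    rw [← real_inner_self_eq_norm_sq, PiLp.inner_apply]
    simp [dotProduct, RCLike.inner_apply, sq]
  have hin : (inner ℝ v x : ℝ) = (v : Fin d → ℝ) ⬝ᵥ x := by
    rw [PiLp.inner_apply]
    simp [dotProduct, RCLike.inner_apply, mul_comm]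
  funext i
  simp only [Matrix.mulVec, dotProduct, Hh, Matrix.sub_apply, Matrix.one_apply,
    Matrix.smul_apply, Matrix.vecMulVec_apply, smul_eq_mul, PiLp.sub_apply, PiLp.smul_apply,
    two_smul, PiLp.add_apply, hin, hns]
  simp only [sub_mul]
  rw [Finset.sum_sub_distrib]
  simp only [ite_mul, one_mul, zero_mul, Finset.sum_ite_eq, Finset.mem_univ, if_true,
    RCLike.ofReal_real_eq_id, id_eq]
  rw [show ∑ j, (2 / ∑ k, v k * v k) * (v i * v j) * x j
      = (2 / ∑ k, v k * v k) * v i * ∑ j, v j * x j from by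
    rw [Finset.mul_sum]
    exact Finset.sum_congr rfl fun j _ => by ring]
  ring

lemma hh_list_struct (hrank : 1 < Module.rank ℝ (Fin d → ℝ)) :
    ∀ L : List (Matrix (Fin d) (Fin d) ℝ), (∀ A ∈ L, ∃ u : Fin d → ℝ, A = Hh u) →
      JoinedIn (OG d) 1 L.prod ∨
        ∃ u : Fin d → ℝ, u ≠ 0 ∧ ∃ h, JoinedIn (OG d) 1 h ∧ L.prod = Hh u * h := by
  intro L
  induction L with
  | nil => intro _; exact Or.inl (by rw [List.prod_nil]; exact JoinedIn.refl og_one)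
  | cons A L ih =>
    intro hL
    obtain ⟨u, rfl⟩ := hL A List.mem_cons_self
    have hL' := fun B hB => hL B (List.mem_cons_of_mem _ hB)
    rw [List.prod_cons]
    rcases ih hL' with hj | ⟨u', hu', h, hj, heq⟩
    · by_cases hu : u = 0
      · rw [hu, Hh_zero, one_mul]; exact Or.inl hj
      · exact Or.inr ⟨u, hu, L.prod, hj, rfl⟩
    · by_cases hu : u = 0
      · rw [hu, Hh_zero, one_mul]; exact Or.inr ⟨u', hu', h, hj, heq⟩
      · left
        rw [heq, ← Matrix.mul_assoc]
        exact joinedIn_og_mul (hh_joined hrank hu hu') hj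

lemma so_joined (hd2 : 2 ≤ d) {Q : Matrix (Fin d) (Fin d) ℝ} (hQ : Qᵀ * Q = 1)
    (hdet : 0 < Q.det) : JoinedIn (OG d) 1 Q := by
  have hrank : 1 < Module.rank ℝ (Fin d → ℝ) := by
    rw [rank_fun']
    simp only [Fintype.card_fin]
    exact_mod_cast hd2
  have hQQ : Q * Qᵀ = 1 := mul_eq_one_comm.mp hQ
  -- the linear isometry induced by Q
  let e : EuclideanSpace ℝ (Fin d) ≃ₗ[ℝ] EuclideanSpace ℝ (Fin d) :=
    { toFun := fun x => WithLp.toLp 2 (Q.mulVec x)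
      invFun := fun x => WithLp.toLp 2 (Qᵀ.mulVec x)
      map_add' := fun x y => by simp [Matrix.mulVec_add]
      map_smul' := fun c x => by simp [Matrix.mulVec_smul]
      left_inv := fun x => by
        simp [Matrix.mulVec_mulVec, hQ]
      right_inv := fun x => by
        simp [Matrix.mulVec_mulVec, hQQ] }
  have hinner : ∀ x y : EuclideanSpace ℝ (Fin d), (inner ℝ (e x) (e y) : ℝ) = inner ℝ x y := by
    intro x y
    rw [euclid_inner_eq_dot, euclid_inner_eq_dot]
    show (Q.mulVec x) ⬝ᵥ (Q.mulVec y) = x ⬝ᵥ y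
    rw [Matrix.dotProduct_mulVec]
    have : (Q.mulVec x) ᵥ* Q = (Qᵀ * Q).mulVec x := by
      rw [← Matrix.mulVec_transpose, Matrix.mulVec_mulVec]
    rw [this, hQ, Matrix.one_mulVec]
  let φiso : EuclideanSpace ℝ (Fin d) ≃ₗᵢ[ℝ] EuclideanSpace ℝ (Fin d) :=
    e.isometryOfInner hinner
  obtain ⟨l, -, hl⟩ := φiso.reflections_generate_dim
  have hact : ∀ (L : List (EuclideanSpace ℝ (Fin d))) (x : EuclideanSpace ℝ (Fin d)),
      (((L.map fun v => Submodule.reflection (ℝ ∙ v)ᗮ).prod :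
        EuclideanSpace ℝ (Fin d) ≃ₗᵢ[ℝ] EuclideanSpace ℝ (Fin d)) x : Fin d → ℝ)
        = ((L.map fun v => Hh (WithLp.ofLp v)).prod).mulVec x := by
    intro L
    induction L with
    | nil => intro x; simp [Matrix.one_mulVec]
    | cons v L ihL =>
      intro x
      rw [List.map_cons, List.prod_cons, List.map_cons, List.prod_cons]
      rw [LinearIsometryEquiv.coe_mul, Function.comp_apply, hh_reflection, ihL,
        Matrix.mulVec_mulVec]
  have hQP : Q = (l.map fun v => Hh (WithLp.ofLp v)).prod := by
    apply matrix_eq_of_mulVec_eq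
    intro x
    have h1 : (φiso (WithLp.toLp 2 x) : Fin d → ℝ) = Q.mulVec x := rfl
    rw [← h1, hl, hact]
  rcases hh_list_struct hrank (l.map fun v => Hh (WithLp.ofLp v))
      (fun A hA => by
        obtain ⟨v, -, rfl⟩ := List.mem_map.mp hA
        exact ⟨v, rfl⟩) with hj | ⟨u, hu, h, hj, heq⟩
  · rwa [hQP]
  · exfalso
    have : Q.det = -(h.det) := by
      rw [hQP, heq, Matrix.det_mul, det_Hh hu, neg_one_mul]
    have hpos := joined_det_pos hj
    rw [this] at hdet
    linarith


end OGsec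

noncomputable section Deform
variable {n d : ℕ} {Γ : Subgroup (Equiv.Perm (Fin n))}

lemma joinedIn_of_icc {α : Type*} [TopologicalSpace α] {F : Set α} {c : ℝ → α}
    (hc : ContinuousOn c (Set.Icc 0 1)) (hmem : ∀ t ∈ Set.Icc (0:ℝ) 1, c t ∈ F) :
    JoinedIn F (c 0) (c 1) :=
  ⟨⟨⟨fun t : unitInterval => c t, hc.restrict⟩, rfl, rfl⟩, fun t => hmem t t.2⟩

lemma deformEquiv_iff_joinedIn {v w : Fin n → Fin d → ℝ} :
    DeformEquiv Γ v w ↔ JoinedIn (SdSet n d Γ) v w := by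
  constructor
  · rintro ⟨c, hc, hmem, h0, h1⟩
    exact h0 ▸ h1 ▸ joinedIn_of_icc hc hmem
  · rintro ⟨γ, hγ⟩
    exact ⟨γ.extend, γ.continuous_extend.continuousOn,
      fun t ht => by rw [γ.extend_apply ht]; exact hγ _, γ.extend_zero, γ.extend_one⟩

lemma rot_mem {u : Fin n → Fin d → ℝ} (hu : u ∈ SdSet n d Γ)
    {X : Matrix (Fin d) (Fin d) ℝ} (hX : X ∈ OG d) :
    (fun i => X.mulVec (u i)) ∈ SdSet n d Γ := by
  obtain ⟨hnorm, S, hS⟩ := hu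
  have hXo : Xᵀ * X = 1 := hX
  have hX' : X * Xᵀ = 1 := mul_eq_one_comm.mp hXo
  have hmat : arrMat (fun i => X.mulVec (u i)) = arrMat u * Xᵀ := by
    ext i j
    simp [arrMat, Matrix.mul_apply, Matrix.mulVec, dotProduct, mul_comm]
  constructor
  · show _ = 1
    rw [hmat, Matrix.transpose_mul, Matrix.transpose_transpose, Matrix.mul_assoc,
      ← Matrix.mul_assoc (arrMat u)ᵀ, hnorm, one_mul, hX']
  · refine ⟨fun φ => X * S φ * Xᵀ, ⟨⟨fun φ => ?_, fun φ ψ => ?_⟩, fun φ i => ?_⟩⟩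
    · simp only [Matrix.transpose_mul, Matrix.transpose_transpose, Matrix.mul_assoc]
      rw [show Xᵀ * (X * (S φ * Xᵀ)) = S φ * Xᵀ from by
        rw [← Matrix.mul_assoc, hXo, one_mul]]
      rw [show (S φ)ᵀ * (S φ * Xᵀ) = Xᵀ from by
        rw [← Matrix.mul_assoc, hS.1.1 φ, one_mul]]
      exact hX'
    · show X * S (φ * ψ) * Xᵀ = (X * S φ * Xᵀ) * (X * S ψ * Xᵀ)
      rw [hS.1.2 φ ψ]
      simp only [Matrix.mul_assoc]
      rw [show Xᵀ * (X * (S ψ * Xᵀ)) = S ψ * Xᵀ from by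
        rw [← Matrix.mul_assoc, hXo, one_mul]]
    · show (X * S φ * Xᵀ).mulVec ((fun i => X.mulVec (u i)) i) = (fun i => X.mulVec (u i)) (φ.val i)
      rw [Matrix.mulVec_mulVec]
      simp only [Matrix.mul_assoc]
      rw [show Xᵀ * X = 1 from hXo, Matrix.mul_one, ← Matrix.mulVec_mulVec, hS.2 φ i]

lemma joined_rotate (hd2 : 2 ≤ d) {u : Fin n → Fin d → ℝ} (hu : u ∈ SdSet n d Γ)
    {Q : Matrix (Fin d) (Fin d) ℝ} (hQ : Qᵀ * Q = 1) (hdet : 0 < Q.det) :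
    JoinedIn (SdSet n d Γ) u (fun i => Q.mulVec (u i)) := by
  obtain ⟨γ, hγ⟩ := so_joined hd2 hQ hdet
  have hcont : ContinuousOn (fun t => fun i => (γ.extend t).mulVec (u i)) (Set.Icc 0 1) := by
    apply Continuous.continuousOn
    apply continuous_pi
    intro i
    apply continuous_pi
    intro j
    simp only [Matrix.mulVec, dotProduct]
    exact continuous_finset_sum _ fun k _ =>
      ((γ.continuous_extend.matrix_elem j k).mul continuous_const)
  have hmem : ∀ t ∈ Set.Icc (0:ℝ) 1, (fun i => (γ.extend t).mulVec (u i)) ∈ SdSet n d Γ := by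
    intro t ht
    exact rot_mem ⟨hu.1, hu.2⟩ (by rw [γ.extend_apply ht]; exact hγ _)
  have hj := joinedIn_of_icc hcont hmem
  rw [show γ.extend 0 = 1 from γ.extend_zero, show γ.extend 1 = Q from γ.extend_one] at hj
  simpa [Matrix.one_mulVec] using hj


lemma norm_scalar (hd : 0 < d) {T : Γ → Matrix (Fin d) (Fin d) ℝ} (hTrep : IsRep Γ T)
    (hirr : IrredRep Γ T) {x : Fin n → Fin d → ℝ}
    (hx : ∀ (φ : Γ) (i : Fin n), (T φ).mulVec (x i) = x (φ.val i)) :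
    ∃ κ : ℝ, 0 ≤ κ ∧ (arrMat x)ᵀ * arrMat x = κ • 1 ∧ (κ = 0 → x = 0) := by
  have hcomm : ∀ φ, ((arrMat x)ᵀ * arrMat x) * T φ = T φ * ((arrMat x)ᵀ * arrMat x) :=
    fun φ => gram_intertwine hTrep hx hx φ
  have hsym : ((arrMat x)ᵀ * arrMat x)ᵀ = (arrMat x)ᵀ * arrMat x := by
    rw [Matrix.transpose_mul, Matrix.transpose_transpose]
  obtain ⟨κ, hκ⟩ := sym_schur hd hirr hsym hcomm
  have hdiag : ∀ j : Fin d, κ = ∑ i, x i j * x i j := by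
    intro j
    have h1 : ((arrMat x)ᵀ * arrMat x) j j = (κ • (1 : Matrix (Fin d) (Fin d) ℝ)) j j := by
      rw [hκ]
    simp only [Matrix.smul_apply, Matrix.one_apply_eq, smul_eq_mul, mul_one] at h1
    rw [← h1]
    simp [Matrix.mul_apply, arrMat]
  refine ⟨κ, ?_, hκ, ?_⟩
  · rw [hdiag ⟨0, hd⟩]
    exact Finset.sum_nonneg fun i _ => mul_self_nonneg _
  · intro h0
    funext i j
    have hz := (Finset.sum_eq_zero_iff_of_nonneg
      (fun i _ => mul_self_nonneg (x i j))).mp ((hdiag j).symm.trans h0) i (Finset.mem_univ i)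
    exact mul_self_eq_zero.mp hz

lemma segment_or_neg (hd : 0 < d) {T : Γ → Matrix (Fin d) (Fin d) ℝ} {v x : Fin n → Fin d → ℝ}
    (hT : IsRepOf Γ T v) (hirr : IrredRep Γ T) (hv : IsNormalized v)
    (hx : ∀ (φ : Γ) (i : Fin n), (T φ).mulVec (x i) = x (φ.val i)) (hxn : IsNormalized x) :
    JoinedIn (SdSet n d Γ) v x ∨ x = -v := by
  set G1 : Matrix (Fin d) (Fin d) ℝ := (arrMat v)ᵀ * arrMat x with hG1def
  set G2 : Matrix (Fin d) (Fin d) ℝ := (arrMat x)ᵀ * arrMat v with hG2def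
  have hG1 : ∀ φ, G1 * T φ = T φ * G1 := fun φ => gram_intertwine hT.1 hx hT.2 φ
  have hG2 : ∀ φ, G2 * T φ = T φ * G2 := fun φ => gram_intertwine hT.1 hT.2 hx φ
  have hG1t : G1ᵀ = G2 := by
    rw [hG1def, hG2def, Matrix.transpose_mul, Matrix.transpose_transpose]
  have hCsym : (G1 + G2)ᵀ = G1 + G2 := by
    rw [Matrix.transpose_add, hG1t, ← hG1t, Matrix.transpose_transpose, add_comm]
  have hCcomm : ∀ φ, (G1 + G2) * T φ = T φ * (G1 + G2) := by
    intro φ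
    rw [Matrix.add_mul, Matrix.mul_add, hG1, hG2]
  obtain ⟨γc, hγc⟩ := sym_schur hd hirr hCsym hCcomm
  have hG2sub : G2 = γc • (1 : Matrix (Fin d) (Fin d) ℝ) - G1 := by
    rw [← hγc]; abel
  set k : ℝ → ℝ := fun s => (1-s)^2 + s^2 + s*(1-s)*γc with hkdef
  set xs : ℝ → (Fin n → Fin d → ℝ) := fun s => fun i => (1-s) • v i + s • x i with hxsdef
  have hxsact : ∀ (s : ℝ) (φ : Γ) (i : Fin n), (T φ).mulVec (xs s i) = xs s (φ.val i) := by
    intro s φ i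
    simp only [hxsdef, Matrix.mulVec_add, Matrix.mulVec_smul, hT.2, hx]
  have harr : ∀ s : ℝ, arrMat (xs s) = (1-s) • arrMat v + s • arrMat x := by
    intro s; ext i j; simp [arrMat, hxsdef]
  have hgram : ∀ s : ℝ, (arrMat (xs s))ᵀ * arrMat (xs s) = k s • 1 := by
    intro s
    have hv' : (arrMat v)ᵀ * arrMat v = 1 := hv
    have hxn' : (arrMat x)ᵀ * arrMat x = 1 := hxn
    rw [harr s]
    simp only [Matrix.transpose_add, Matrix.transpose_smul, Matrix.add_mul, Matrix.mul_add,
      Matrix.smul_mul, Matrix.mul_smul, smul_smul]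
    rw [hv', hxn', ← hG1def, ← hG2def, hG2sub, hkdef]
    match_scalars <;> ring
  have hkform : ∀ s : ℝ, 0 ≤ k s := by
    intro s
    obtain ⟨κ, hκnn, hκeq, -⟩ := norm_scalar hd hT.1 hirr (hxsact s)
    have : κ = k s := by
      have h1 : (κ • (1 : Matrix (Fin d) (Fin d) ℝ)) ⟨0,hd⟩ ⟨0,hd⟩
          = (k s • (1 : Matrix (Fin d) (Fin d) ℝ)) ⟨0,hd⟩ ⟨0,hd⟩ := by
        rw [← hκeq, hgram]
      simpa using h1
    exact this ▸ hκnn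
  by_cases hhalf : k (1/2) = 0
  · right
    obtain ⟨κ, -, hκeq, hκ0⟩ := norm_scalar hd hT.1 hirr (hxsact (1/2))
    have hκk : κ = k (1/2) := by
      have h1 : (κ • (1 : Matrix (Fin d) (Fin d) ℝ)) ⟨0,hd⟩ ⟨0,hd⟩
          = (k (1/2) • (1 : Matrix (Fin d) (Fin d) ℝ)) ⟨0,hd⟩ ⟨0,hd⟩ := by
        rw [← hκeq, hgram]
      simpa using h1
    have hxs0 : xs (1/2) = 0 := hκ0 (hκk.trans hhalf)
    funext i j
    have := congrFun (congrFun hxs0 i) j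
    simp only [hxsdef, Pi.add_apply, Pi.smul_apply, smul_eq_mul, Pi.zero_apply] at this
    have : (1 - 1/2 : ℝ) * v i j + (1/2 : ℝ) * x i j = 0 := this
    show x i j = (-v) i j
    simp only [Pi.neg_apply]
    linarith
  · left
    have hγ2 : 0 < 2 + γc := by
      have h0 := hkform (1/2)
      have hne : k (1/2) ≠ 0 := hhalf
      have : k (1/2) = (2 + γc)/4 := by rw [hkdef]; ring
      rw [this] at h0 hne
      rcases lt_or_eq_of_le h0 with h | h
      · linarith
      · exact absurd h.symm hne
    have hkpos : ∀ s ∈ Set.Icc (0:ℝ) 1, 0 < k s := by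
      intro s hs
      rcases eq_or_ne s (1/2) with rfl | hne
      · show (0:ℝ) < (1 - 1/2)^2 + (1/2)^2 + (1/2)*(1-(1/2))*γc
        nlinarith
      · have h1 : (1 - 2*s) ≠ 0 := by intro h; apply hne; linarith
        have h2 : 0 < (1 - 2*s)*(1 - 2*s) := mul_self_pos.mpr h1
        have h3 : 0 ≤ s * (1 - s) * (2 + γc) :=
          mul_nonneg (mul_nonneg hs.1 (by linarith [hs.2])) (le_of_lt hγ2)
        show (0:ℝ) < (1 - s)^2 + s^2 + s*(1-s)*γc
        nlinarith
    set cpath : ℝ → (Fin n → Fin d → ℝ) :=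
      fun s => (Real.sqrt (k s))⁻¹ • (xs s) with hcdef
    have hc0 : cpath 0 = v := by
      funext i j
      simp only [hcdef, hxsdef, hkdef, Pi.smul_apply, smul_eq_mul]
      norm_num
    have hc1 : cpath 1 = x := by
      funext i j
      simp only [hcdef, hxsdef, hkdef, Pi.smul_apply, smul_eq_mul]
      norm_num
    have harrc : ∀ s : ℝ, arrMat (cpath s) = (Real.sqrt (k s))⁻¹ • arrMat (xs s) := by
      intro s; ext i j; simp [arrMat, hcdef]
    have hmem : ∀ s ∈ Set.Icc (0:ℝ) 1, cpath s ∈ SdSet n d Γ := by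
      intro s hs
      have hks := hkpos s hs
      have hsq : Real.sqrt (k s) * Real.sqrt (k s) = k s := Real.mul_self_sqrt (le_of_lt hks)
      have hsne : Real.sqrt (k s) ≠ 0 := ne_of_gt (Real.sqrt_pos.mpr hks)
      constructor
      · show _ = 1
        rw [harrc s, Matrix.transpose_smul, Matrix.smul_mul, Matrix.mul_smul, hgram s]
        match_scalars
        field_simp
        rw [Real.sq_sqrt hks.le]
      · refine ⟨T, hT.1, fun φ i => ?_⟩
        show (T φ).mulVec ((Real.sqrt (k s))⁻¹ • xs s i) = (Real.sqrt (k s))⁻¹ • xs s (φ.val i)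
        rw [Matrix.mulVec_smul, hxsact s φ i]
    have hcont : ContinuousOn cpath (Set.Icc 0 1) := by
      apply ContinuousOn.smul (f := fun s => (Real.sqrt (k s))⁻¹) (g := xs)
      · apply ContinuousOn.inv₀
        · apply Continuous.continuousOn
          apply Real.continuous_sqrt.comp
          rw [hkdef]
          exact (((continuous_const.sub continuous_id).pow 2).add (continuous_id.pow 2)).add
            ((continuous_id.mul (continuous_const.sub continuous_id)).mul continuous_const)
        · intro s hs
          exact ne_of_gt (Real.sqrt_pos.mpr (hkpos s hs))
      · apply Continuous.continuousOn
        apply continuous_pi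
        intro i
        apply continuous_pi
        intro j
        show Continuous fun s => (1-s) * v i j + s * x i j
        exact ((continuous_const.sub continuous_id).mul continuous_const).add
          (continuous_id.mul continuous_const)
    have := joinedIn_of_icc hcont hmem
    rwa [hc0, hc1] at this

end Deform


theorem stmt10 {n d : ℕ} (Γ : Subgroup (Equiv.Perm (Fin n))) (hd : Even d)
    (v w : Fin n → Fin d → ℝ)
    (hv : v ∈ SdSet n d Γ) (hw : w ∈ SdSet n d Γ)
    (T T' : Γ → Matrix (Fin d) (Fin d) ℝ)
    (hT : IsRepOf Γ T v) (hTirr : IrredRep Γ T)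
    (hT' : IsRepOf Γ T' w) (hT'irr : IrredRep Γ T') :
    DeformEquiv Γ v w ↔ PosIsoReps Γ T T' := by
  rcases Nat.eq_zero_or_pos d with hd0 | hdpos
  · -- trivial case d = 0
    subst hd0
    constructor
    · intro _
      refine ⟨1, by rw [Matrix.det_one]; norm_num, fun φ => ?_⟩
      ext i j
      exact i.elim0
    · intro _
      have hvw : v = w := by
        funext i j
        exact j.elim0
      subst hvw
      exact ⟨fun _ => v, continuousOn_const, fun t _ => hv, rfl, rfl⟩
  have hd2 : 2 ≤ d := by
    obtain ⟨r, hr⟩ := hd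
    omega
  haveI : Nonempty (Fin d) := ⟨⟨0, hdpos⟩⟩
  constructor
  · -- forward direction
    rintro ⟨c, hc, hmemc, h0, h1⟩
    haveI : PreconnectedSpace (Set.Icc (0:ℝ) 1) := Subtype.preconnectedSpace isPreconnected_Icc
    set cr : (Set.Icc (0:ℝ) 1) → (Fin n → Fin d → ℝ) := fun t => c ↑t with hcrdef
    have hcr : Continuous cr := hc.restrict
    have hnorm : ∀ t, IsNormalized (cr t) := fun t => (hmemc ↑t t.2).1
    have hrep : ∀ t, ∃ S, IsRepOf Γ S (cr t) := fun t => (hmemc ↑t t.2).2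
    have huniq : ∀ (t : Set.Icc (0:ℝ) 1) (S S' : Γ → Matrix (Fin d) (Fin d) ℝ),
        IsRepOf Γ S (cr t) → IsRepOf Γ S' (cr t) → S = S' := by
      intro t S S' hS hS'
      funext φ
      exact rep_unique (hnorm t) fun i => by rw [hS.2 φ i, hS'.2 φ i]
    set P : Set (Set.Icc (0:ℝ) 1) := {t | ∃ S X, IsRepOf Γ S (cr t) ∧
      (∀ φ, X * T φ = S φ * X) ∧ 0 < X.det} with hPdef
    set B : Set (Set.Icc (0:ℝ) 1) := {t | ∃ S X, IsRepOf Γ S (cr t) ∧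
      (∀ φ, X * T φ = S φ * X) ∧ X.det < 0} with hBdef
    set N : Set (Set.Icc (0:ℝ) 1) := {t | ∀ S, IsRepOf Γ S (cr t) →
      ∀ X : Matrix (Fin d) (Fin d) ℝ, (∀ φ, X * T φ = S φ * X) → X.det = 0} with hNdef
    have hdc : ∀ t₀ : Set.Icc (0:ℝ) 1,
        Continuous fun t => ((arrMat (cr t))ᵀ * arrMat (cr t₀)).det := by
      intro t₀
      apply Continuous.matrix_det
      exact Continuous.matrix_mul (Continuous.matrix_transpose hcr) continuous_const
    have hdc' : ∀ t₀ : Set.Icc (0:ℝ) 1,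
        Continuous fun t => ((arrMat (cr t₀))ᵀ * arrMat (cr t)).det := by
      intro t₀
      apply Continuous.matrix_det
      exact Continuous.matrix_mul continuous_const hcr
    have htrans : ∀ (t t₀ : Set.Icc (0:ℝ) 1) S S₀, IsRepOf Γ S (cr t) → IsRepOf Γ S₀ (cr t₀) →
        ∀ φ, ((arrMat (cr t))ᵀ * arrMat (cr t₀)) * S₀ φ
          = S φ * ((arrMat (cr t))ᵀ * arrMat (cr t₀)) :=
      fun t t₀ S S₀ hS hS₀ φ => gram_intertwine hS₀.1 hS₀.2 hS.2 φ
    have hdiag : ∀ t₀ : Set.Icc (0:ℝ) 1, ((arrMat (cr t₀))ᵀ * arrMat (cr t₀)).det = 1 := by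
      intro t₀
      rw [show (arrMat (cr t₀))ᵀ * arrMat (cr t₀) = 1 from hnorm t₀, Matrix.det_one]
    have hPopen : IsOpen P := by
      rw [isOpen_iff_forall_mem_open]
      rintro t₀ ⟨S₀, X, hS₀, hXc, hXd⟩
      refine ⟨(fun t => ((arrMat (cr t))ᵀ * arrMat (cr t₀)).det) ⁻¹' Set.Ioi 0, ?_,
        (hdc t₀).isOpen_preimage _ isOpen_Ioi, ?_⟩
      · intro t ht
        obtain ⟨S, hS⟩ := hrep t
        refine ⟨S, ((arrMat (cr t))ᵀ * arrMat (cr t₀)) * X, hS, fun φ => ?_, ?_⟩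
        · rw [Matrix.mul_assoc, hXc φ, ← Matrix.mul_assoc, htrans t t₀ S S₀ hS hS₀ φ,
            Matrix.mul_assoc]
        · rw [Matrix.det_mul]
          exact mul_pos ht hXd
      · show 0 < ((arrMat (cr t₀))ᵀ * arrMat (cr t₀)).det
        rw [hdiag t₀]; norm_num
    have hBopen : IsOpen B := by
      rw [isOpen_iff_forall_mem_open]
      rintro t₀ ⟨S₀, X, hS₀, hXc, hXd⟩
      refine ⟨(fun t => ((arrMat (cr t))ᵀ * arrMat (cr t₀)).det) ⁻¹' Set.Ioi 0, ?_,
        (hdc t₀).isOpen_preimage _ isOpen_Ioi, ?_⟩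
      · intro t ht
        obtain ⟨S, hS⟩ := hrep t
        refine ⟨S, ((arrMat (cr t))ᵀ * arrMat (cr t₀)) * X, hS, fun φ => ?_, ?_⟩
        · rw [Matrix.mul_assoc, hXc φ, ← Matrix.mul_assoc, htrans t t₀ S S₀ hS hS₀ φ,
            Matrix.mul_assoc]
        · rw [Matrix.det_mul]
          exact mul_neg_of_pos_of_neg ht hXd
      · show 0 < ((arrMat (cr t₀))ᵀ * arrMat (cr t₀)).det
        rw [hdiag t₀]; norm_num
    have hNopen : IsOpen N := by
      rw [isOpen_iff_forall_mem_open]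
      intro t₀ hN
      refine ⟨(fun t => ((arrMat (cr t₀))ᵀ * arrMat (cr t)).det) ⁻¹' Set.Ioi 0, ?_,
        (hdc' t₀).isOpen_preimage _ isOpen_Ioi, ?_⟩
      · intro t ht S hS X hXc
        obtain ⟨S₀, hS₀⟩ := hrep t₀
        have h3 := hN S₀ hS₀ (((arrMat (cr t₀))ᵀ * arrMat (cr t)) * X)
          (fun φ => by rw [Matrix.mul_assoc, hXc φ, ← Matrix.mul_assoc,
            htrans t₀ t S₀ S hS₀ hS φ, Matrix.mul_assoc])
        rw [Matrix.det_mul] at h3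
        rcases mul_eq_zero.mp h3 with h4 | h4
        · exact absurd h4 (ne_of_gt ht)
        · exact h4
      · show 0 < ((arrMat (cr t₀))ᵀ * arrMat (cr t₀)).det
        rw [hdiag t₀]; norm_num
    have hcover : ∀ t, t ∈ P ∨ t ∈ B ∨ t ∈ N := by
      intro t
      by_cases hN : t ∈ N
      · exact Or.inr (Or.inr hN)
      · rw [hNdef, Set.mem_setOf_eq] at hN
        push_neg at hN
        obtain ⟨S, hS, X, hXc, hXd⟩ := hN
        rcases lt_or_gt_of_ne hXd with h | h
        · exact Or.inr (Or.inl ⟨S, X, hS, hXc, h⟩)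
        · exact Or.inl ⟨S, X, hS, hXc, h⟩
    have hPB : ∀ t, t ∈ P → t ∈ B → False := by
      rintro t ⟨S, X, hS, hXc, hXd⟩ ⟨S', Y, hS', hYc, hYd⟩
      have hSS : S' = S := huniq t S' S hS' hS
      rw [hSS] at hYc
      set f : ℝ → ℝ := fun s => ((1-s) • X + s • Y).det with hfdef
      have hfc : Continuous f := by
        apply Continuous.matrix_det
        apply continuous_matrix
        intro i j
        show Continuous fun s : ℝ => (1-s) * X i j + s * Y i j
        exact ((continuous_const.sub continuous_id).mul continuous_const).add
          (continuous_id.mul continuous_const)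
      have hf0 : f 0 = X.det := by simp [hfdef]
      have hf1 : f 1 = Y.det := by simp [hfdef]
      have h0mem : (0:ℝ) ∈ Set.Icc (f 1) (f 0) := by
        rw [hf0, hf1]
        exact ⟨le_of_lt hYd, le_of_lt hXd⟩
      obtain ⟨s, hsI, hfs⟩ := intermediate_value_Icc' zero_le_one hfc.continuousOn h0mem
      set Z : Matrix (Fin d) (Fin d) ℝ := (1-s) • X + s • Y with hZdef
      have hZc : ∀ φ, Z * T φ = S φ * Z := by
        intro φ
        rw [hZdef, Matrix.add_mul, Matrix.smul_mul, Matrix.smul_mul, hXc, hYc,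
          Matrix.mul_add, Matrix.mul_smul, Matrix.mul_smul]
      have hZdet : Z.det = 0 := hfs
      have hZ0 : Z = 0 := by
        obtain ⟨z, hz0, hzZ⟩ := Matrix.exists_mulVec_eq_zero_iff.mpr hZdet
        have hWinv : ∀ (φ : Γ), ∀ y ∈ LinearMap.ker Z.mulVecLin,
            (T φ).mulVec y ∈ LinearMap.ker Z.mulVecLin := by
          intro φ y hy
          rw [LinearMap.mem_ker, Matrix.mulVecLin_apply] at hy ⊢
          rw [Matrix.mulVec_mulVec, hZc φ, ← Matrix.mulVec_mulVec, hy, Matrix.mulVec_zero]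
        rcases hTirr _ hWinv with hbot | htop
        · exfalso
          apply hz0
          have : z ∈ LinearMap.ker Z.mulVecLin := by
            rw [LinearMap.mem_ker, Matrix.mulVecLin_apply]; exact hzZ
          rw [hbot] at this
          simpa using this
        · apply matrix_eq_of_mulVec_eq
          intro y
          have : y ∈ LinearMap.ker Z.mulVecLin := htop ▸ Submodule.mem_top
          rw [LinearMap.mem_ker, Matrix.mulVecLin_apply] at this
          rw [this, Matrix.zero_mulVec]
      have hXe : (1-s) • X = -(s • Y) := eq_neg_of_add_eq_zero_left hZ0
      have hdet1 : ((1-s) • X).det = (1-s)^d * X.det := by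
        rw [Matrix.det_smul, Fintype.card_fin]
      have hdet2 : (-(s • Y)).det = s^d * Y.det := by
        rw [Matrix.det_neg, Matrix.det_smul, Fintype.card_fin, Even.neg_one_pow hd, one_mul]
      have heq : (1-s)^d * X.det = s^d * Y.det := by
        rw [← hdet1, hXe, hdet2]
      have hR : s^d * Y.det ≤ 0 :=
        mul_nonpos_iff.mpr (Or.inl ⟨hd.pow_nonneg s, le_of_lt hYd⟩)
      have hL : 0 ≤ (1-s)^d * X.det := mul_nonneg (hd.pow_nonneg _) (le_of_lt hXd)
      have hL0 : (1-s)^d * X.det = 0 := le_antisymm (heq ▸ hR) hL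
      have hs1 : s = 1 := by
        rcases mul_eq_zero.mp hL0 with h | h
        · have := pow_eq_zero_iff hdpos.ne' |>.mp h
          linarith
        · exact absurd h (ne_of_gt hXd)
      have hY0 : Y = 0 := by
        have := hZ0
        rw [hZdef, hs1] at this
        simpa using this
      rw [hY0, Matrix.det_zero] at hYd
      exact lt_irrefl 0 hYd
    have hPN : ∀ t, t ∈ P → t ∈ N → False := by
      rintro t ⟨S, X, hS, hXc, hXd⟩ hN
      exact absurd (hN S hS X hXc) (ne_of_gt hXd)
    have hPclosed : IsClosed P := by
      rw [← isOpen_compl_iff]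
      have hPc : Pᶜ = B ∪ N := by
        ext t
        constructor
        · intro ht
          exact (hcover t).resolve_left ht
        · rintro (hB | hN) hP
          · exact hPB t hP hB
          · exact hPN t hP hN
      rw [hPc]
      exact hBopen.union hNopen
    have h0' : cr ⟨0, by norm_num⟩ = v := h0
    have hmem0 : (⟨0, by norm_num⟩ : Set.Icc (0:ℝ) 1) ∈ P := by
      refine ⟨T, 1, ?_, fun φ => by rw [one_mul, mul_one], by rw [Matrix.det_one]; norm_num⟩
      rw [h0']
      exact hT
    have hPuniv : P = Set.univ := IsClopen.eq_univ ⟨hPclosed, hPopen⟩ ⟨_, hmem0⟩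
    have hmem1 : (⟨1, by norm_num⟩ : Set.Icc (0:ℝ) 1) ∈ P := hPuniv ▸ Set.mem_univ _
    obtain ⟨S, X, hS, hXc, hXd⟩ := hmem1
    have h1' : cr ⟨1, by norm_num⟩ = w := h1
    rw [h1'] at hS
    have hST' : S = T' := by
      funext φ
      exact rep_unique hw.1 fun i => by rw [hS.2 φ i, hT'.2 φ i]
    exact ⟨X, hXd, fun φ => by rw [hXc φ, hST']⟩
  · -- backward direction
    rintro ⟨R, hdetR, hcommR⟩
    have hTrep := hT.1
    have hT'rep := hT'.1
    have hRT : ∀ φ, T φ * Rᵀ = Rᵀ * T' φ := by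
      intro φ
      have h1 := congrArg Matrix.transpose (hcommR φ⁻¹)
      rw [Matrix.transpose_mul, Matrix.transpose_mul, repInv hTrep φ⁻¹, inv_inv,
        repInv hT'rep φ⁻¹, inv_inv] at h1
      exact h1
    have hSsym : (Rᵀ * R)ᵀ = Rᵀ * R := by
      rw [Matrix.transpose_mul, Matrix.transpose_transpose]
    have hScomm : ∀ φ, (Rᵀ * R) * T φ = T φ * (Rᵀ * R) := by
      intro φ
      calc Rᵀ * R * T φ = Rᵀ * (R * T φ) := Matrix.mul_assoc _ _ _
        _ = Rᵀ * (T' φ * R) := by rw [hcommR]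
        _ = (Rᵀ * T' φ) * R := (Matrix.mul_assoc _ _ _).symm
        _ = (T φ * Rᵀ) * R := by rw [← hRT]
        _ = T φ * (Rᵀ * R) := Matrix.mul_assoc _ _ _
    obtain ⟨lam, hlam⟩ := sym_schur hdpos hTirr hSsym hScomm
    have hlamd : lam ^ d = R.det * R.det := by
      have h1 : (Rᵀ * R).det = R.det * R.det := by
        rw [Matrix.det_mul, Matrix.det_transpose]
      have h2 : (lam • (1 : Matrix (Fin d) (Fin d) ℝ)).det = lam ^ d := by
        rw [Matrix.det_smul, Fintype.card_fin, Matrix.det_one, mul_one]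
      rw [← h2, ← hlam, h1]
    have hlampos : 0 < lam := by
      have hnn : 0 ≤ lam := by
        set e0 : Fin d → ℝ := Pi.single ⟨0, hdpos⟩ 1 with he0
        have h1 : (Rᵀ * R).mulVec e0 = lam • e0 := by
          rw [hlam, Matrix.smul_mulVec, Matrix.one_mulVec]
        have h2 : ((Rᵀ * R).mulVec e0) ⬝ᵥ e0 = (R.mulVec e0) ⬝ᵥ (R.mulVec e0) := by
          rw [← Matrix.mulVec_mulVec, Matrix.mulVec_transpose]
          exact (Matrix.dotProduct_mulVec _ _ _).symm
        have h3 : 0 ≤ (R.mulVec e0) ⬝ᵥ (R.mulVec e0) := dot_self_nonneg _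
        rw [h1] at h2
        have h4 : (lam • e0) ⬝ᵥ e0 = lam := by
          simp [dotProduct, he0, Pi.single_apply]
        rw [h4] at h2
        linarith
      have hne : lam ≠ 0 := by
        intro h
        rw [h, zero_pow hdpos.ne'] at hlamd
        have : 0 < R.det * R.det := mul_pos hdetR hdetR
        linarith
      exact lt_of_le_of_ne hnn (Ne.symm hne)
    set mu := Real.sqrt lam with hmudef
    have hmu : 0 < mu := Real.sqrt_pos.mpr hlampos
    have hmusq : mu * mu = lam := Real.mul_self_sqrt (le_of_lt hlampos)
    set Q := mu⁻¹ • R with hQdef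
    have hQo : Qᵀ * Q = 1 := by
      have hmune : mu ≠ 0 := ne_of_gt hmu
      rw [hQdef, Matrix.transpose_smul, Matrix.smul_mul, Matrix.mul_smul, hlam,
        smul_smul, smul_smul]
      rw [show mu⁻¹ * mu⁻¹ * lam = 1 from by rw [← hmusq]; field_simp, one_smul]
    have hQdetpos : 0 < Q.det := by
      rw [hQdef, Matrix.det_smul, Fintype.card_fin]
      exact mul_pos (pow_pos (inv_pos.mpr hmu) d) hdetR
    have hQTcomm : ∀ φ, T φ * Qᵀ = Qᵀ * T' φ := by
      intro φ
      rw [hQdef, Matrix.transpose_smul, Matrix.mul_smul, hRT, Matrix.smul_mul]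
    set wt : Fin n → Fin d → ℝ := fun i => Qᵀ.mulVec (w i) with hwtdef
    have hwtact : ∀ (φ : Γ) (i : Fin n), (T φ).mulVec (wt i) = wt (φ.val i) := by
      intro φ i
      show (T φ).mulVec (Qᵀ.mulVec (w i)) = Qᵀ.mulVec (w (φ.val i))
      rw [Matrix.mulVec_mulVec, hQTcomm, ← Matrix.mulVec_mulVec, hT'.2]
    have hwtmat : arrMat wt = arrMat w * Q := by
      ext i j
      simp [arrMat, hwtdef, Matrix.mulVec, Matrix.mul_apply, dotProduct, mul_comm]
    have hwtnorm : IsNormalized wt := by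
      show _ = 1
      rw [hwtmat, Matrix.transpose_mul, Matrix.mul_assoc, ← Matrix.mul_assoc ((arrMat w)ᵀ),
        show (arrMat w)ᵀ * arrMat w = 1 from hw.1, one_mul, hQo]
    have hQwt : (fun i => Q.mulVec (wt i)) = w := by
      funext i
      show Q.mulVec (Qᵀ.mulVec (w i)) = w i
      rw [Matrix.mulVec_mulVec, mul_eq_one_comm.mp hQo, Matrix.one_mulVec]
    rcases segment_or_neg hdpos hT hTirr hv.1 hwtact hwtnorm with hj | hneg
    · have hwtS : wt ∈ SdSet n d Γ := ⟨hwtnorm, T, hT.1, hwtact⟩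
      have hrot := joined_rotate hd2 hwtS hQo hQdetpos
      rw [hQwt] at hrot
      exact deformEquiv_iff_joinedIn.mpr (hj.trans hrot)
    · have hwQv : (fun i => (-Q).mulVec (v i)) = w := by
        funext i
        have h1 : wt i = -(v i) := by
          rw [hneg]
          rfl
        have h2 : w i = Q.mulVec (wt i) := (congrFun hQwt i).symm
        rw [h2, h1, Matrix.mulVec_neg, Matrix.neg_mulVec]
      have hnegQo : (-Q)ᵀ * (-Q) = 1 := by
        rw [Matrix.transpose_neg, Matrix.neg_mul, Matrix.mul_neg, neg_neg, hQo]
      have hnegQdet : 0 < (-Q).det := by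
        rw [Matrix.det_neg, Fintype.card_fin, Even.neg_one_pow hd, one_mul]
        exact hQdetpos
      have hrot := joined_rotate hd2 hv hnegQo hnegQdet
      rw [hwQv] at hrot
      exact deformEquiv_iff_joinedIn.mpr hrot
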